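/- Let G be a well-covered graph with α(G) ≥ 2 that is locally Cohen-Macaulay (i.e., G_v is Cohen-Macaulay for every vertex v) and whose independence complex Δ(G) is connected. Then Δ(G) is connected in codimension one. -/

import Mathlib

open Finset
open Classical

noncomputable section

variable {V : Type*}

/-- An (abstract) simplicial complex on `V`, given as a finite set of finite faces:
nonvoid (contains the empty face) and closed under taking subsets. -/
def IsComplex (Δ : Finset (Finset V)) : Prop :=
  ∅ ∈ Δ ∧ ∀ F ∈ Δ, ∀ H ⊆ F, H ∈ Δ

/-- The reduced Euler characteristic `χ̃(Δ) = Σ_{F ∈ Δ} (-1)^{|F| - 1}`. -/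
def chiT (Δ : Finset (Finset V)) : ℤ :=
  ∑ F ∈ Δ, (-1 : ℤ) ^ (F.card + 1)

/-- The link of a face `F` in `Δ`. -/
def link (Δ : Finset (Finset V)) (F : Finset V) : Finset (Finset V) :=
  Δ.filter (fun H => H ∪ F ∈ Δ ∧ H ∩ F = ∅)

/-- The facets (maximal faces) of `Δ`. -/
def facets (Δ : Finset (Finset V)) : Finset (Finset V) :=
  Δ.filter (fun F => ∀ H ∈ Δ, F ⊆ H → F = H)

/-- `Δ` is pure: all facets have the same cardinality. -/
def PureC (Δ : Finset (Finset V)) : Prop :=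
  ∀ F ∈ facets Δ, ∀ H ∈ facets Δ, F.card = H.card

/-- One more than the dimension of `Δ`: the maximal cardinality of a face. -/
def maxCard (Δ : Finset (Finset V)) : ℕ := Δ.sup Finset.card

/-- The dimension of `Δ` as an integer (`-1` for `Δ = {∅}`). -/
def dimC (Δ : Finset (Finset V)) : ℤ := (maxCard Δ : ℤ) - 1

/-- `Δ` is an Euler complex: pure, and every link has reduced Euler characteristic
`(-1)^{dim}` (note `(-1)^{dim lk} = (-1)^{maxCard lk + 1}`). -/
def Eulerian (Δ : Finset (Finset V)) : Prop :=
  PureC Δ ∧ ∀ F ∈ Δ, chiT (link Δ F) = (-1 : ℤ) ^ (maxCard (link Δ F) + 1)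

/-- `Δ` is semi-Eulerian: the link of each vertex is Eulerian. -/
def SemiEulerian (Δ : Finset (Finset V)) : Prop :=
  ∀ x : V, {x} ∈ Δ → Eulerian (link Δ {x})

/-- The independence complex of a graph `G`: faces are the independent sets. -/
def indepC (G : SimpleGraph V) [Fintype V] : Finset (Finset V) :=
  Finset.univ.filter (fun s => ∀ a ∈ s, ∀ b ∈ s, ¬ G.Adj a b)

/-- The independence number `α(G)`. -/
def indNum (G : SimpleGraph V) [Fintype V] : ℕ := (indepC G).sup Finset.card

/-- `G` is well-covered: every maximal independent set has cardinality `α(G)`. -/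
def WellCovered (G : SimpleGraph V) [Fintype V] : Prop :=
  ∀ s ∈ indepC G, (∀ t ∈ indepC G, s ⊆ t → s = t) → s.card = indNum G

/-- The vertex set of the localization `G_S = G \ (S ∪ N_G(S))`. -/
def locSet (G : SimpleGraph V) (S : Finset V) : Set V :=
  {v | v ∉ S ∧ ∀ u ∈ S, ¬ G.Adj v u}

/-- The localization `G_S`, as an induced subgraph. -/
def locG (G : SimpleGraph V) (S : Finset V) : SimpleGraph (locSet G S) :=
  G.induce (locSet G S)

/-- The deletion `G ∖ v`, as an induced subgraph. -/
def Gdel (G : SimpleGraph V) (v : V) : SimpleGraph {u : V // u ≠ v} :=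
  G.induce {u | u ≠ v}

/-- `G` belongs to the class `W₂`: it is well-covered and for every vertex `v`,
`G ∖ v` is well-covered with `α(G ∖ v) = α(G)`. -/
def InW2 (G : SimpleGraph V) [Fintype V] : Prop :=
  WellCovered G ∧ ∀ v : V, WellCovered (Gdel G v) ∧ indNum (Gdel G v) = indNum G

/-- `δ*(v)`: the number of non-isolated vertices of the induced subgraph `H[N_H(v)]`. -/
def deltaStarV {T : Type*} (H : SimpleGraph T) [Fintype T] (v : T) : ℕ :=
  (Finset.univ.filter (fun u => H.Adj v u ∧ ∃ w, H.Adj v w ∧ H.Adj u w)).card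

/-- `2K₂`: two disjoint edges. -/
def twoK2 : SimpleGraph (Fin 4) := SimpleGraph.fromEdgeSet {s(0, 1), s(2, 3)}

/-- The join `G * H` of two disjoint graphs. -/
def joinG {α β : Type*} (G : SimpleGraph α) (H : SimpleGraph β) : SimpleGraph (α ⊕ β) where
  Adj x y :=
    match x, y with
    | Sum.inl a, Sum.inl b => G.Adj a b
    | Sum.inr a, Sum.inr b => H.Adj a b
    | Sum.inl _, Sum.inr _ => True
    | Sum.inr _, Sum.inl _ => True
  symm := by
    constructor
    rintro (a | a) (b | b) h
    · exact G.adj_symm h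
    · trivial
    · trivial
    · exact H.adj_symm h
  loopless := by
    constructor
    rintro (a | a) h
    · exact G.irrefl h
    · exact H.irrefl h

/-- `G` is pseudo-planar: for every independent set `S`, `δ*(G_S) ≤ 5` and
`G_S` is not isomorphic to `2K₂ * 2K₂`. -/
def PseudoPlanar (G : SimpleGraph V) [Fintype V] : Prop :=
  ∀ S ∈ indepC G,
    ((locSet G S).Nonempty → ∃ v : locSet G S, deltaStarV (locG G S) v ≤ 5) ∧
    IsEmpty (locG G S ≃g joinG twoK2 twoK2)

/-- `H` is a minor of `G`: there are disjoint nonempty connected branch sets in `G`,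
one for each vertex of `H`, with edges between branch sets of adjacent vertices. -/
def IsMinor {α β : Type*} (H : SimpleGraph β) (G : SimpleGraph α) : Prop :=
  ∃ B : β → Set α,
    (∀ u, (B u).Nonempty) ∧ (∀ u, (G.induce (B u)).Connected) ∧
    (∀ u w, u ≠ w → Disjoint (B u) (B w)) ∧
    (∀ u w, H.Adj u w → ∃ x ∈ B u, ∃ y ∈ B w, G.Adj x y)

def K5 : SimpleGraph (Fin 5) := ⊤

def K33 : SimpleGraph (Fin 3 ⊕ Fin 3) := completeBipartiteGraph (Fin 3) (Fin 3)

/-- Planarity via Wagner's theorem: no `K₅` minor and no `K_{3,3}` minor. -/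
def Planar (G : SimpleGraph V) : Prop := ¬ IsMinor K5 G ∧ ¬ IsMinor K33 G

/-- The 5-cycle on `Fin 5`. -/
def C5 : SimpleGraph (Fin 5) :=
  SimpleGraph.fromEdgeSet {s(0, 1), s(1, 2), s(2, 3), s(3, 4), s(4, 0)}

/-- A pentagon (5-cycle) with exactly one chord. -/
def pentChord : SimpleGraph (Fin 5) :=
  SimpleGraph.fromEdgeSet {s(0, 1), s(1, 2), s(2, 3), s(3, 4), s(4, 0), s(1, 3)}

/-- The bowtie: two triangles sharing exactly one vertex. -/
def bowtie : SimpleGraph (Fin 5) :=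
  SimpleGraph.fromEdgeSet {s(0, 1), s(1, 2), s(2, 0), s(1, 3), s(3, 4), s(4, 1)}

/-- The possible chords of the 5-cycle `C5`. -/
def chordSet : Finset (Sym2 (Fin 5)) := {s(0, 2), s(0, 3), s(1, 3), s(1, 4), s(2, 4)}

/-- The simplicial boundary map on chains (with coefficients in `k`),
sending `e_F ↦ Σ_{v ∈ F} (-1)^{pos of v in F} e_{F ∖ v}`. -/
def bdry (k : Type*) [Field k] [LinearOrder V] : (Finset V →₀ k) →ₗ[k] (Finset V →₀ k) :=
  Finsupp.lsum k fun F => (LinearMap.id : k →ₗ[k] k).smulRight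
    (∑ v ∈ F, ((-1 : k) ^ (F.filter (fun w => w < v)).card) • Finsupp.single (F.erase v) (1 : k))

/-- The submodule of `c`-chains of `Δ`: spanned by basis elements of faces of cardinality `c`. -/
def chainsSub (k : Type*) [Field k] (Δ : Finset (Finset V)) (c : ℕ) :
    Submodule k (Finset V →₀ k) :=
  Submodule.span k {x | ∃ F ∈ Δ, F.card = c ∧ x = Finsupp.single F (1 : k)}

/-- Vanishing of the reduced simplicial homology `H̃_{c-1}(Δ; k)`:
every cycle supported on faces of cardinality `c` is a boundary. -/
def HVanish (k : Type*) [Field k] [LinearOrder V] (Δ : Finset (Finset V)) (c : ℕ) : Prop :=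
  ∀ ω ∈ chainsSub k Δ c, bdry k ω = 0 → ∃ η ∈ chainsSub k Δ (c + 1), bdry k η = ω

/-- Cohen–Macaulayness of `Δ` over `k`, via Reisner's criterion:
`H̃_i(lk_Δ F; k) = 0` for all faces `F` and all `i < dim lk_Δ F`. -/
def IsCM (k : Type*) [Field k] [LinearOrder V] (Δ : Finset (Finset V)) : Prop :=
  ∀ F ∈ Δ, ∀ c : ℕ, (c : ℤ) - 1 < dimC (link Δ F) → HVanish k (link Δ F) c

/-- The core of `Δ`: the restriction of `Δ` to the vertices `x` with `st_Δ(x) ≠ Δ`. -/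
def coreC (Δ : Finset (Finset V)) : Finset (Finset V) :=
  Δ.filter (fun F => ∀ x ∈ F, ∃ H ∈ Δ, H ∪ {x} ∉ Δ)

/-- Gorensteinness of `Δ` over `k`, via Stanley's criterion:
`core Δ` is a Cohen–Macaulay Euler complex. -/
def IsGor (k : Type*) [Field k] [LinearOrder V] (Δ : Finset (Finset V)) : Prop :=
  IsCM k (coreC Δ) ∧ Eulerian (coreC Δ)

/-- Connectedness of `Δ` (all vertices of `V` being vertices of `Δ`):
its 1-skeleton graph is connected. -/
def ComplexConnected (Δ : Finset (Finset V)) : Prop :=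
  (SimpleGraph.fromRel fun a b => ({a, b} : Finset V) ∈ Δ).Connected

/-- `Δ` is connected in codimension one. -/
def ConnCodimOne (Δ : Finset (Finset V)) : Prop :=
  ∀ F ∈ facets Δ, ∀ H ∈ facets Δ,
    Relation.ReflTransGen
      (fun A B => A ∈ facets Δ ∧ B ∈ facets Δ ∧ (A ∩ B).card = maxCard Δ - 1) F H

/-- The graph obtained from `H` and a vertex `x` by adding new vertices `a, b, c`
(coded `0, 1, 2 : Fin 3`), joining `a` to `b` and to every neighbor of `x`,
`b` to `c`, and `c` to `x`. -/
def extGraph (H : SimpleGraph V) (x : V) : SimpleGraph (V ⊕ Fin 3) :=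
  SimpleGraph.fromRel fun p q =>
    match p, q with
    | Sum.inl u, Sum.inl w => H.Adj u w
    | Sum.inl u, Sum.inr i => (i = 0 ∧ H.Adj u x) ∨ (i = 2 ∧ u = x)
    | Sum.inr i, Sum.inr j => (i = 0 ∧ j = 1) ∨ (i = 1 ∧ j = 2)
    | Sum.inr _, Sum.inl _ => False

end
section Aux

variable {V : Type*}

/-- The edge relation of the 1-skeleton of a complex. -/
def EdgeRel (Δ : Finset (Finset V)) (a b : V) : Prop :=
  a ≠ b ∧ ({a, b} : Finset V) ∈ Δ

/-- 0-connectivity of a complex: any two vertices joined by a path of edges. -/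
def Conn0 (Δ : Finset (Finset V)) : Prop :=
  ∀ x y : V, ({x} : Finset V) ∈ Δ → ({y} : Finset V) ∈ Δ →
    Relation.ReflTransGen (EdgeRel Δ) x y

lemma union_singleton'' (s : Finset V) (a : V) : s ∪ {a} = insert a s := by
  classical
  rw [Finset.union_comm, ← Finset.insert_eq]

lemma mem_link {Δ : Finset (Finset V)} {F H : Finset V} :
    H ∈ link Δ F ↔ H ∈ Δ ∧ H ∪ F ∈ Δ ∧ H ∩ F = ∅ := by
  simp [link, Finset.mem_filter]

lemma mem_facets {Δ : Finset (Finset V)} {F : Finset V} :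
    F ∈ facets Δ ↔ F ∈ Δ ∧ ∀ H ∈ Δ, F ⊆ H → F = H := by
  simp [facets, Finset.mem_filter]

lemma card_le_maxCard {Δ : Finset (Finset V)} {F : Finset V} (h : F ∈ Δ) :
    F.card ≤ maxCard Δ :=
  Finset.le_sup h

lemma exists_facet {Δ : Finset (Finset V)} {F : Finset V} (h : F ∈ Δ) :
    ∃ M ∈ facets Δ, F ⊆ M := by
  classical
  obtain ⟨M, hM, hmax⟩ := Finset.exists_max_image (Δ.filter (fun H => F ⊆ H)) Finset.card
    ⟨F, Finset.mem_filter.2 ⟨h, Finset.Subset.refl F⟩⟩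
  rw [Finset.mem_filter] at hM
  refine ⟨M, mem_facets.2 ⟨hM.1, fun H hH hMH => ?_⟩, hM.2⟩
  exact Finset.eq_of_subset_of_card_le hMH
    (hmax H (Finset.mem_filter.2 ⟨hH, hM.2.trans hMH⟩))

lemma link_isComplex {Δ : Finset (Finset V)} {F : Finset V} (hc : IsComplex Δ)
    (hF : F ∈ Δ) : IsComplex (link Δ F) := by
  constructor
  · exact mem_link.2 ⟨hc.1, by simpa using hF, by simp⟩
  · intro H hH H' hH'
    rw [mem_link] at hH ⊢
    refine ⟨hc.2 H hH.1 H' hH', hc.2 _ hH.2.1 _ ?_, ?_⟩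
    · intro x hx; rw [Finset.mem_union] at hx ⊢; exact hx.imp (fun h => hH' h) id
    · rw [Finset.eq_empty_iff_forall_notMem]
      intro x hx
      rw [Finset.mem_inter] at hx
      have : x ∈ H ∩ F := Finset.mem_inter.2 ⟨hH' hx.1, hx.2⟩
      rw [hH.2.2] at this
      exact absurd this (Finset.notMem_empty x)

lemma link_link {Δ : Finset (Finset V)} {F A : Finset V} (hc : IsComplex Δ)
    (hA : A ∈ link Δ F) : link (link Δ F) A = link Δ (A ∪ F) := by
  classical
  rw [mem_link] at hA
  ext H
  rw [mem_link, mem_link, mem_link, mem_link]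
  constructor
  · rintro ⟨⟨h1, h2, h3⟩, ⟨h4, h5, h6⟩, h7⟩
    refine ⟨h1, ?_, ?_⟩
    · rwa [← Finset.union_assoc]
    · rw [Finset.inter_union_distrib_left, h7, h3, Finset.union_empty]
  · rintro ⟨h1, h2, h3⟩
    have hbig := h2
    rw [← Finset.union_assoc] at hbig
    have hHF : H ∩ F = ∅ := by
      rw [Finset.eq_empty_iff_forall_notMem]; intro x hx
      rw [Finset.mem_inter] at hx
      have : x ∈ H ∩ (A ∪ F) :=
        Finset.mem_inter.2 ⟨hx.1, Finset.mem_union.2 (Or.inr hx.2)⟩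
      rw [h3] at this; exact absurd this (Finset.notMem_empty x)
    have hHA : H ∩ A = ∅ := by
      rw [Finset.eq_empty_iff_forall_notMem]; intro x hx
      rw [Finset.mem_inter] at hx
      have : x ∈ H ∩ (A ∪ F) :=
        Finset.mem_inter.2 ⟨hx.1, Finset.mem_union.2 (Or.inl hx.2)⟩
      rw [h3] at this; exact absurd this (Finset.notMem_empty x)
    refine ⟨⟨h1, hc.2 _ hbig _ ?_, hHF⟩, ⟨hc.2 _ hbig _ ?_, hbig, ?_⟩, hHA⟩
    · intro x hx; rw [Finset.mem_union] at hx ⊢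
      rcases hx with h | h
      · exact Or.inl (Finset.mem_union.2 (Or.inl h))
      · exact Or.inr h
    · intro x hx; rw [Finset.mem_union] at hx ⊢
      rcases hx with h | h
      · exact Or.inl (Finset.mem_union.2 (Or.inl h))
      · exact Or.inl (Finset.mem_union.2 (Or.inr h))
    · rw [Finset.union_inter_distrib_right, hHF, hA.2.2, Finset.union_empty]

lemma singleton_mem_of_mem {Δ : Finset (Finset V)} (hc : IsComplex Δ) {F : Finset V}
    (hF : F ∈ Δ) {x : V} (hx : x ∈ F) : ({x} : Finset V) ∈ Δ :=
  hc.2 F hF {x} (Finset.singleton_subset_iff.2 hx)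

lemma notmem_of_mem_link {Δ : Finset (Finset V)} {x : V} {A : Finset V}
    (h : A ∈ link Δ {x}) : x ∉ A := by
  intro hx
  have : x ∈ A ∩ ({x} : Finset V) := Finset.mem_inter.2 ⟨hx, Finset.mem_singleton_self x⟩
  rw [(mem_link.1 h).2.2] at this
  exact absurd this (Finset.notMem_empty x)

lemma facets_link_vertex {Δ : Finset (Finset V)} (hc : IsComplex Δ) {x : V}
    {A : Finset V} (hA : A ∈ facets (link Δ {x})) :
    insert x A ∈ facets Δ ∧ x ∉ A := by
  classical
  obtain ⟨hAl, hAmax⟩ := mem_facets.1 hA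
  have hxA : x ∉ A := notmem_of_mem_link hAl
  obtain ⟨h1, h2, h3⟩ := mem_link.1 hAl
  rw [union_singleton''] at h2
  refine ⟨mem_facets.2 ⟨h2, fun C hC hsub => ?_⟩, hxA⟩
  have hxC : x ∈ C := hsub (Finset.mem_insert_self x A)
  have hCe : C.erase x ∈ link Δ {x} := by
    refine mem_link.2 ⟨hc.2 C hC _ (Finset.erase_subset x C), ?_, ?_⟩
    · rw [union_singleton'', Finset.insert_erase hxC]; exact hC
    · rw [Finset.eq_empty_iff_forall_notMem]
      intro y hy
      rw [Finset.mem_inter, Finset.mem_singleton] at hy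
      exact (Finset.mem_erase.1 hy.1).1 hy.2
  have hAsub : A ⊆ C.erase x := by
    rw [Finset.subset_erase]
    exact ⟨(Finset.subset_insert x A).trans hsub, hxA⟩
  have heq := hAmax _ hCe hAsub
  rw [heq, Finset.insert_erase hxC]

lemma facets_link_vertex' {Δ : Finset (Finset V)} (hc : IsComplex Δ) {x : V}
    {F : Finset V} (hF : F ∈ facets Δ) (hx : x ∈ F) :
    F.erase x ∈ facets (link Δ {x}) := by
  classical
  obtain ⟨hFm, hFmax⟩ := mem_facets.1 hF
  have hl : F.erase x ∈ link Δ {x} := by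
    refine mem_link.2 ⟨hc.2 F hFm _ (Finset.erase_subset x F), ?_, ?_⟩
    · rw [union_singleton'', Finset.insert_erase hx]; exact hFm
    · rw [Finset.eq_empty_iff_forall_notMem]
      intro y hy
      rw [Finset.mem_inter, Finset.mem_singleton] at hy
      exact (Finset.mem_erase.1 hy.1).1 hy.2
  refine mem_facets.2 ⟨hl, fun B hB hsub => ?_⟩
  obtain ⟨hB1, hB2, hB3⟩ := mem_link.1 hB
  rw [union_singleton''] at hB2
  have hxB : x ∉ B := notmem_of_mem_link hB
  have : F ⊆ insert x B := by
    intro y hy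
    by_cases hyx : y = x
    · exact hyx ▸ Finset.mem_insert_self x B
    · exact Finset.mem_insert_of_mem (hsub (Finset.mem_erase.2 ⟨hyx, hy⟩))
  have hFeq := hFmax _ hB2 this
  apply Finset.Subset.antisymm hsub
  rw [Finset.subset_erase]
  exact ⟨by rw [hFeq]; exact Finset.subset_insert x B, hxB⟩

lemma maxCard_link {Δ : Finset (Finset V)} (hc : IsComplex Δ) {d : ℕ}
    (hmax : maxCard Δ = d) (hfac : ∀ F ∈ facets Δ, F.card = d)
    {A : Finset V} (hA : A ∈ Δ) : maxCard (link Δ A) = d - A.card := by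
  classical
  apply le_antisymm
  · apply Finset.sup_le
    intro H hH
    obtain ⟨h1, h2, h3⟩ := mem_link.1 hH
    have hd : (H ∪ A).card ≤ d := hmax ▸ card_le_maxCard h2
    have hcard : (H ∪ A).card = H.card + A.card := by
      rw [Finset.card_union_of_disjoint]
      rwa [Finset.disjoint_iff_inter_eq_empty]
    omega
  · obtain ⟨M, hM, hAM⟩ := exists_facet hA
    have hMc : M.card = d := hfac M hM
    have : M \ A ∈ link Δ A := by
      refine mem_link.2 ⟨hc.2 M (mem_facets.1 hM).1 _ (Finset.sdiff_subset), ?_, ?_⟩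
      · rw [Finset.sdiff_union_of_subset hAM]; exact (mem_facets.1 hM).1
      · rw [Finset.sdiff_inter_self]
    have := card_le_maxCard this
    rw [Finset.card_sdiff_of_subset hAM, hMc] at this
    exact this

lemma erase_union_singleton {A : Finset V} {v : V} (hv : v ∈ A) :
    A.erase v ∪ {v} = A := by
  rw [union_singleton'', Finset.insert_erase hv]

lemma erase_mem_link {Δ : Finset (Finset V)} (hc : IsComplex Δ) {A : Finset V}
    (hA : A ∈ Δ) {v : V} (hv : v ∈ A) : A.erase v ∈ link Δ {v} := by
  refine mem_link.2 ⟨hc.2 A hA _ (Finset.erase_subset v A), ?_, ?_⟩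
  · rw [erase_union_singleton hv]; exact hA
  · rw [Finset.eq_empty_iff_forall_notMem]
    intro a ha
    rw [Finset.mem_inter, Finset.mem_singleton] at ha
    exact (Finset.mem_erase.1 ha.1).1 ha.2

lemma connCodimOne_small {Δ : Finset (Finset V)} (hmax : maxCard Δ ≤ 1) :
    ConnCodimOne Δ := by
  intro F hF H hH
  by_cases hFH : F = H
  · subst hFH; exact Relation.ReflTransGen.refl
  · have hF1 : F.card ≤ 1 := le_trans (card_le_maxCard (mem_facets.1 hF).1) hmax
    have h0 : (F ∩ H).card = 0 := by
      by_contra h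
      have h1 : 1 ≤ (F ∩ H).card := Nat.one_le_iff_ne_zero.2 h
      have hFeq : F ∩ H = F :=
        Finset.eq_of_subset_of_card_le Finset.inter_subset_left (le_trans hF1 h1)
      exact hFH ((mem_facets.1 hF).2 H (mem_facets.1 hH).1
        (hFeq ▸ Finset.inter_subset_right))
    exact Relation.ReflTransGen.single ⟨hF, hH, by omega⟩

lemma main_conn : ∀ (d : ℕ) (Δ : Finset (Finset V)), IsComplex Δ →
    maxCard Δ = d → (∀ F ∈ facets Δ, F.card = d) →
    (2 ≤ d → Conn0 Δ) →
    (∀ A ∈ Δ, A.Nonempty → A.card + 2 ≤ d → Conn0 (link Δ A)) →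
    ConnCodimOne Δ := by
  intro d
  induction d using Nat.strong_induction_on with
  | _ d IH =>
  intro Δ hc hmax hfac hconn hlink
  by_cases hd : d ≤ 1
  · exact connCodimOne_small (by omega)
  push_neg at hd
  have hlinkCC : ∀ x : V, ({x} : Finset V) ∈ Δ → ConnCodimOne (link Δ {x}) := by
    intro x hx
    have hcl : IsComplex (link Δ {x}) := link_isComplex hc hx
    have hml : maxCard (link Δ {x}) = d - 1 := by
      have := maxCard_link hc hmax hfac hx
      simpa using this
    have hfl : ∀ F ∈ facets (link Δ {x}), F.card = d - 1 := by
      intro A hA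
      obtain ⟨hfA, hxA⟩ := facets_link_vertex hc hA
      have := hfac _ hfA
      rw [Finset.card_insert_of_notMem hxA] at this
      omega
    refine IH (d-1) (by omega) _ hcl hml hfl ?_ ?_
    · intro h2
      exact hlink {x} hx (Finset.singleton_nonempty x) (by simp only [Finset.card_singleton]; omega)
    · intro A hA hAne hAcard
      rw [link_link hc hA]
      have hmem : A ∪ {x} ∈ Δ := (mem_link.1 hA).2.1
      have hxA : x ∉ A := notmem_of_mem_link hA
      have hcard : (A ∪ {x}).card = A.card + 1 := by
        rw [union_singleton'', Finset.card_insert_of_notMem hxA]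
      exact hlink _ hmem (by simp [union_singleton'']) (by omega)
  have key : ∀ x : V, ∀ F ∈ facets Δ, ∀ H ∈ facets Δ, x ∈ F → x ∈ H →
      Relation.ReflTransGen (fun A B => A ∈ facets Δ ∧ B ∈ facets Δ ∧
        (A ∩ B).card = maxCard Δ - 1) F H := by
    intro x F hF H hH hxF hxH
    have hxΔ : ({x} : Finset V) ∈ Δ := singleton_mem_of_mem hc (mem_facets.1 hF).1 hxF
    have hFe := facets_link_vertex' hc hF hxF
    have hHe := facets_link_vertex' hc hH hxH
    have hpath := hlinkCC x hxΔ _ hFe _ hHe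
    have hml : maxCard (link Δ {x}) = d - 1 := by
      simpa using maxCard_link hc hmax hfac hxΔ
    have hstep : ∀ A B : Finset V,
        (A ∈ facets (link Δ {x}) ∧ B ∈ facets (link Δ {x}) ∧
          (A ∩ B).card = maxCard (link Δ {x}) - 1) →
        (insert x A ∈ facets Δ ∧ insert x B ∈ facets Δ ∧
          (insert x A ∩ insert x B).card = maxCard Δ - 1) := by
      intro A B h
      obtain ⟨hA, hB, hAB⟩ := h
      obtain ⟨hA', hxA⟩ := facets_link_vertex hc hA
      obtain ⟨hB', hxB⟩ := facets_link_vertex hc hB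
      refine ⟨hA', hB', ?_⟩
      rw [Finset.insert_inter_of_mem (Finset.mem_insert_self x B),
        Finset.inter_insert_of_notMem hxA,
        Finset.card_insert_of_notMem (fun h => hxA (Finset.mem_inter.1 h).1)]
      rw [hml] at hAB
      omega
    have hlift := Relation.ReflTransGen.lift
      (p := fun A B => A ∈ facets Δ ∧ B ∈ facets Δ ∧ (A ∩ B).card = maxCard Δ - 1)
      (fun A => insert x A) hstep _ _ hpath
    simp only [Function.onFun] at hlift
    rwa [Finset.insert_erase hxF, Finset.insert_erase hxH] at hlift
  intro F hF H hH
  have hFne : F.Nonempty := by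
    have := hfac F hF; rw [← Finset.card_pos, this]; omega
  have hHne : H.Nonempty := by
    have := hfac H hH; rw [← Finset.card_pos, this]; omega
  obtain ⟨x₀, hx₀⟩ := hFne
  obtain ⟨y₀, hy₀⟩ := hHne
  have hpath := hconn hd x₀ y₀ (singleton_mem_of_mem hc (mem_facets.1 hF).1 hx₀)
    (singleton_mem_of_mem hc (mem_facets.1 hH).1 hy₀)
  have claim : ∀ y, Relation.ReflTransGen (EdgeRel Δ) x₀ y →
      ∀ H' ∈ facets Δ, y ∈ H' →
      Relation.ReflTransGen (fun A B => A ∈ facets Δ ∧ B ∈ facets Δ ∧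
        (A ∩ B).card = maxCard Δ - 1) F H' := by
    intro y hy
    induction hy with
    | refl => intro H' hH' hyH'; exact key x₀ F hF H' hH' hx₀ hyH'
    | @tail b c hab hbc ih =>
      intro H' hH' hcH'
      obtain ⟨hbc1, hbc2⟩ := hbc
      obtain ⟨M, hM, hsubM⟩ := exists_facet hbc2
      have hbM : b ∈ M := hsubM (by simp)
      have hcM : c ∈ M := hsubM (by simp)
      exact (ih M hM hbM).trans (key c M hM H' hH' hcM hcH')
  exact claim y₀ hpath H hH hy₀

section Hom

variable [LinearOrder V] {k : Type*} [Field k]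

lemma pairIrrel (a b : V) :
    (insert a ({b} : Finset V)) =
      @insert V (Finset V)
        (@Finset.instInsert V (fun p q => Classical.propDecidable (p = q))) a {b} := by
  congr!

lemma bdry_single (F : Finset V) (c : k) :
    bdry k (Finsupp.single F c) =
      ∑ v ∈ F, (c * (-1 : k) ^ (F.filter (fun w => w < v)).card) •
        Finsupp.single (F.erase v) (1 : k) := by
  unfold bdry
  rw [Finsupp.lsum_single]
  rw [LinearMap.smulRight_apply, LinearMap.id_apply, Finset.smul_sum]
  apply Finset.sum_congr rfl
  intro v _
  rw [smul_smul]

lemma bdry_vertex (x : V) (c : k) :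
    bdry k (Finsupp.single ({x} : Finset V) c) = Finsupp.single (∅ : Finset V) c := by
  rw [bdry_single, Finset.sum_singleton]
  rw [Finset.erase_singleton]
  rw [Finset.filter_singleton, if_neg (lt_irrefl x), Finset.card_empty, pow_zero,
    mul_one, Finsupp.smul_single, smul_eq_mul, mul_one]

lemma bdry_edge {a b : V} (hab : a < b) :
    bdry k (Finsupp.single ({a, b} : Finset V) (1 : k)) =
      Finsupp.single ({b} : Finset V) (1 : k) - Finsupp.single ({a} : Finset V) (1 : k) := by
  classical
  have hne : a ≠ b := ne_of_lt hab
  rw [bdry_single, Finset.sum_pair hne]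
  have h1 : (({a, b} : Finset V).filter (fun w => w < a)).card = 0 := by
    rw [Finset.card_eq_zero, Finset.filter_eq_empty_iff]
    intro w hw
    rw [Finset.mem_insert, Finset.mem_singleton] at hw
    rcases hw with h | h
    · simp [h]
    · subst h; exact not_lt.2 (le_of_lt hab)
  have h2 : (({a, b} : Finset V).filter (fun w => w < b)).card = 1 := by
    have : ({a, b} : Finset V).filter (fun w => w < b) = {a} := by
      ext w
      rw [Finset.mem_filter, Finset.mem_insert, Finset.mem_singleton, Finset.mem_singleton]
      constructor
      · rintro ⟨h | h, hlt⟩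
        · exact h
        · subst h; exact absurd hlt (lt_irrefl w)
      · rintro rfl; exact ⟨Or.inl rfl, hab⟩
    rw [this, Finset.card_singleton]
  have he1 : ({a, b} : Finset V).erase a = {b} := by
    rw [Finset.erase_insert]
    rwa [Finset.mem_singleton]
  have he2 : ({a, b} : Finset V).erase b = {a} := by
    rw [Finset.erase_insert_of_ne hne, Finset.erase_singleton, Finset.insert_empty]
  rw [h1, h2, he1, he2]
  rw [pow_zero, pow_one, one_mul, one_mul, one_smul, neg_smul, one_smul, sub_eq_add_neg]

lemma conn0_of_hvanish [Fintype V] (Δ : Finset (Finset V)) (hc : IsComplex Δ)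
    (hv : HVanish k Δ 1) : Conn0 Δ := by
  intro x y hx hy
  by_contra hnr
  set T : Finset V := Finset.univ.filter (fun z => Relation.ReflTransGen (EdgeRel Δ) x z)
    with hT
  set φ : (Finset V →₀ k) → k := fun c => ∑ z ∈ T, c {z} with hφ
  have φ_add : ∀ c c', φ (c + c') = φ c + φ c' := by
    intro c c'
    simp only [hφ, Finsupp.add_apply]
    rw [Finset.sum_add_distrib]
  have φ_sub : ∀ c c', φ (c - c') = φ c - φ c' := by
    intro c c'
    simp only [hφ, Finsupp.sub_apply]
    rw [Finset.sum_sub_distrib]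
  have φ_smul : ∀ (r : k) c, φ (r • c) = r * φ c := by
    intro r c
    simp only [hφ, Finsupp.smul_apply, smul_eq_mul]
    rw [Finset.mul_sum]
  have φ_single : ∀ (w : V) (r : k), φ (Finsupp.single ({w} : Finset V) r) =
      if w ∈ T then r else 0 := by
    intro w r
    simp only [hφ]
    rw [Finset.sum_congr rfl (fun z _ => Finsupp.single_apply)]
    simp only [Finset.singleton_inj]
    exact Finset.sum_ite_eq T w (fun _ => r)
  set ω : Finset V →₀ k :=
    Finsupp.single ({x} : Finset V) 1 - Finsupp.single ({y} : Finset V) 1 with hω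
  have hωmem : ω ∈ chainsSub k Δ 1 := by
    apply sub_mem
    · exact Submodule.subset_span ⟨{x}, hx, Finset.card_singleton x, rfl⟩
    · exact Submodule.subset_span ⟨{y}, hy, Finset.card_singleton y, rfl⟩
  have hωcyc : bdry k ω = 0 := by
    rw [hω, map_sub, bdry_vertex, bdry_vertex, sub_self]
  obtain ⟨η, hηmem, hηbd⟩ := hv ω hωmem hωcyc
  have hφbd : φ (bdry k η) = 0 := by
    refine Submodule.span_induction ?_ ?_ ?_ ?_ hηmem
    · rintro c ⟨F, hF, hFcard, rfl⟩
      obtain ⟨a, b, hab, rfl⟩ := Finset.card_eq_two.1 hFcard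
      have hFp : @insert V (Finset V)
          (@Finset.instInsert V (fun p q => Classical.propDecidable (p = q))) a {b} ∈ Δ := by
        rw [← pairIrrel]; exact hF
      have hedge : a ∈ T ↔ b ∈ T := by
        simp only [hT, Finset.mem_filter, Finset.mem_univ, true_and]
        constructor
        · intro h; exact h.tail ⟨hab, hFp⟩
        · intro h
          refine h.tail ⟨hab.symm, ?_⟩
          rwa [@Finset.pair_comm V (fun p q => Classical.propDecidable (p = q)) a b] at hFp
      rcases lt_or_gt_of_ne hab with h | h
      · rw [bdry_edge h, φ_sub, φ_single, φ_single]
        by_cases hbT : b ∈ T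
        · rw [if_pos hbT, if_pos (hedge.2 hbT), sub_self]
        · rw [if_neg hbT, if_neg (fun haT => hbT (hedge.1 haT)), sub_self]
      · rw [Finset.pair_comm, bdry_edge h, φ_sub, φ_single, φ_single]
        by_cases haT : a ∈ T
        · rw [if_pos haT, if_pos (hedge.1 haT), sub_self]
        · rw [if_neg haT, if_neg (fun hbT => haT (hedge.2 hbT)), sub_self]
    · rw [map_zero]
      simp [hφ]
    · intro c c' _ _ h1 h2
      rw [map_add, φ_add, h1, h2, add_zero]
    · intro r c _ h1
      rw [map_smul, φ_smul, h1, mul_zero]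
  rw [hηbd] at hφbd
  have hval : φ ω = 1 := by
    rw [hω, φ_sub, φ_single, φ_single, if_pos, if_neg]
    · simp
    · simp only [hT, Finset.mem_filter, Finset.mem_univ, true_and]
      exact hnr
    · simp only [hT, Finset.mem_filter, Finset.mem_univ, true_and]
      exact Relation.ReflTransGen.refl
  rw [hφbd] at hval
  exact one_ne_zero hval.symm

end Hom


section Transfer

lemma link_image {α β : Type*} (f : α ↪ β) (Γ : Finset (Finset α)) (B : Finset α) :
    link (Γ.image (Finset.map f)) (B.map f) = (link Γ B).image (Finset.map f) := by
  classical
  ext S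
  constructor
  · intro hS
    obtain ⟨h1, h2, h3⟩ := mem_link.1 hS
    obtain ⟨S', hS', rfl⟩ := Finset.mem_image.1 h1
    obtain ⟨U', hU', hUeq⟩ := Finset.mem_image.1 h2
    have h4 : S' ∪ B = U' := by
      apply Finset.map_injective f
      rw [Finset.map_union, hUeq]
    have h5 : S' ∩ B = ∅ := by
      have : (S' ∩ B).map f = ∅ := by rw [Finset.map_inter, h3]
      rwa [Finset.map_eq_empty] at this
    exact Finset.mem_image.2 ⟨S', mem_link.2 ⟨hS', h4 ▸ hU', h5⟩, rfl⟩
  · intro hS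
    obtain ⟨S', hS', rfl⟩ := Finset.mem_image.1 hS
    obtain ⟨h1, h2, h3⟩ := mem_link.1 hS'
    refine mem_link.2 ⟨Finset.mem_image_of_mem _ h1, ?_, ?_⟩
    · rw [← Finset.map_union]; exact Finset.mem_image_of_mem _ h2
    · rw [← Finset.map_inter, h3, Finset.map_empty]

lemma image_mem_extract {α β : Type*} (f : α ↪ β) {Γ : Finset (Finset α)} {S : Finset β}
    (h : S ∈ Γ.image (Finset.map f)) : ∃ S' ∈ Γ, S'.map f = S :=
  Finset.mem_image.1 h

lemma conn0_image {α β : Type*} (f : α ↪ β) (Γ : Finset (Finset α)) (h : Conn0 Γ) :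
    Conn0 (Γ.image (Finset.map f)) := by
  classical
  intro x y hx hy
  obtain ⟨Sx, hSx, hSxeq⟩ := Finset.mem_image.1 hx
  obtain ⟨Sy, hSy, hSyeq⟩ := Finset.mem_image.1 hy
  obtain ⟨x', hx'1, hx'2⟩ : ∃ x', Sx = {x'} ∧ f x' = x := by
    have hcard : Sx.card = 1 := by rw [← Finset.card_map, hSxeq, Finset.card_singleton]
    obtain ⟨x', hx'⟩ := Finset.card_eq_one.1 hcard
    refine ⟨x', hx', ?_⟩
    rw [hx', Finset.map_singleton] at hSxeq
    exact Finset.singleton_inj.1 hSxeq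
  obtain ⟨y', hy'1, hy'2⟩ : ∃ y', Sy = {y'} ∧ f y' = y := by
    have hcard : Sy.card = 1 := by rw [← Finset.card_map, hSyeq, Finset.card_singleton]
    obtain ⟨y', hy'⟩ := Finset.card_eq_one.1 hcard
    refine ⟨y', hy', ?_⟩
    rw [hy', Finset.map_singleton] at hSyeq
    exact Finset.singleton_inj.1 hSyeq
  have hpath := h x' y' (hx'1 ▸ hSx) (hy'1 ▸ hSy)
  have hstep : ∀ a b : α, EdgeRel Γ a b →
      EdgeRel (Γ.image (Finset.map f)) (f a) (f b) := by
    intro a b hab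
    refine ⟨f.injective.ne hab.1, ?_⟩
    have := Finset.mem_image_of_mem (Finset.map f) hab.2
    rwa [Finset.map_insert, Finset.map_singleton] at this
  have hlift := Relation.ReflTransGen.lift (p := EdgeRel (Γ.image (Finset.map f)))
    f hstep _ _ hpath
  simp only [Function.onFun] at hlift
  rwa [hx'2, hy'2] at hlift

lemma maxCard_image {α β : Type*} (f : α ↪ β) (Γ : Finset (Finset α)) :
    maxCard (Γ.image (Finset.map f)) = maxCard Γ := by
  classical
  unfold maxCard
  rw [Finset.sup_image]
  apply Finset.sup_congr rfl
  intro S _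
  simp

lemma indep_isComplex {α : Type*} [Fintype α] (G : SimpleGraph α) :
    IsComplex (indepC G) := by
  constructor
  · simp [indepC]
  · intro F hF H hHF
    simp only [indepC, Finset.mem_filter, Finset.mem_univ, true_and] at hF ⊢
    intro a ha b hb
    exact hF a (hHF ha) b (hHF hb)

lemma mem_indepC {α : Type*} [Fintype α] {G : SimpleGraph α} {S : Finset α} :
    S ∈ indepC G ↔ ∀ a ∈ S, ∀ b ∈ S, ¬ G.Adj a b := by
  simp [indepC]

lemma link_indep_vertex {α : Type*} [Fintype α] (G : SimpleGraph α) (v : α) :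
    link (indepC G) {v} =
      (indepC (locG G {v})).image
        (Finset.map (Function.Embedding.subtype (fun x => x ∈ locSet G ({v} : Finset α)))) := by
  classical
  ext S
  constructor
  · intro hS
    obtain ⟨h1, h2, h3⟩ := mem_link.1 hS
    rw [mem_indepC] at h1
    rw [mem_indepC] at h2
    have hvS : v ∉ S := by
      intro hv
      have : v ∈ S ∩ ({v} : Finset α) := Finset.mem_inter.2 ⟨hv, Finset.mem_singleton_self v⟩
      rw [h3] at this
      exact absurd this (Finset.notMem_empty v)
    have hsub : ∀ x ∈ S, x ∈ locSet G ({v} : Finset α) := by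
      intro x hx
      refine ⟨?_, ?_⟩
      · rw [Finset.mem_singleton]
        intro hxv
        exact hvS (hxv ▸ hx)
      · intro u hu
        rw [Finset.mem_singleton] at hu
        rw [hu]
        exact h2 x (Finset.mem_union_left _ hx) v
          (Finset.mem_union_right _ (Finset.mem_singleton_self v))
    refine Finset.mem_image.2 ⟨S.subtype _, ?_, Finset.subtype_map_of_mem hsub⟩
    rw [mem_indepC]
    intro a ha b hb
    rw [Finset.mem_subtype] at ha hb
    intro hadj
    rw [locG, SimpleGraph.comap_adj] at hadj
    exact h1 a.val ha b.val hb hadj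
  · intro hS
    obtain ⟨S', hS', rfl⟩ := Finset.mem_image.1 hS
    rw [mem_indepC] at hS'
    have hind : ∀ a ∈ S'.map (Function.Embedding.subtype _), ∀ b ∈ S'.map
        (Function.Embedding.subtype _), ¬ G.Adj a b := by
      intro a ha b hb hadj
      obtain ⟨a', ha', rfl⟩ := Finset.mem_map.1 ha
      obtain ⟨b', hb', rfl⟩ := Finset.mem_map.1 hb
      refine hS' a' ha' b' hb' ?_
      rw [locG, SimpleGraph.comap_adj]
      exact hadj
    have hmemW : ∀ a ∈ S'.map (Function.Embedding.subtype _),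
        a ∈ locSet G ({v} : Finset α) := by
      intro a ha
      obtain ⟨a', _, rfl⟩ := Finset.mem_map.1 ha
      exact a'.2
    refine mem_link.2 ⟨mem_indepC.2 hind, ?_, ?_⟩
    · rw [mem_indepC]
      intro a ha b hb hadj
      rw [Finset.mem_union] at ha hb
      rcases ha with ha | ha <;> rcases hb with hb | hb
      · exact hind a ha b hb hadj
      · rw [Finset.mem_singleton] at hb; subst hb
        exact (hmemW a ha).2 b (Finset.mem_singleton_self b) hadj
      · rw [Finset.mem_singleton] at ha; subst ha
        exact (hmemW b hb).2 a (Finset.mem_singleton_self a) hadj.symm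
      · rw [Finset.mem_singleton] at ha hb
        rw [ha, hb] at hadj
        exact G.irrefl hadj
    · rw [Finset.eq_empty_iff_forall_notMem]
      intro a ha
      rw [Finset.mem_inter, Finset.mem_singleton] at ha
      have := (hmemW a ha.1).1
      rw [Finset.mem_singleton] at this
      exact this ha.2

end Transfer

end Aux

theorem stmt_15 {V : Type*} [Fintype V] [LinearOrder V] (k : Type*) [Field k]
    (G : SimpleGraph V) (hwc : WellCovered G) (hα : 2 ≤ indNum G)
    (hlcm : ∀ v : V, IsCM k (indepC (locG G {v})))
    (hconn : ComplexConnected (indepC G)) :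
    ConnCodimOne (indepC G) := by
  have hcx : IsComplex (indepC G) := indep_isComplex G
  have hmaxd : maxCard (indepC G) = indNum G := rfl
  have hfacd : ∀ F ∈ facets (indepC G), F.card = indNum G := by
    intro F hF
    obtain ⟨h1, h2⟩ := mem_facets.1 hF
    exact hwc F h1 h2
  have hconn0 : Conn0 (indepC G) := by
    intro x y hx hy
    have hreach := hconn.preconnected x y
    rw [SimpleGraph.reachable_iff_reflTransGen] at hreach
    refine Relation.ReflTransGen.mono ?_ _ _ hreach
    intro a b hab
    rw [SimpleGraph.fromRel_adj] at hab
    obtain ⟨hne, h | h⟩ := hab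
    · exact ⟨hne, h⟩
    · refine ⟨hne, ?_⟩
      rwa [@Finset.pair_comm V (fun p q => Classical.propDecidable (p = q)) b a] at h
  have hlink0 : ∀ A ∈ indepC G, A.Nonempty → A.card + 2 ≤ indNum G →
      Conn0 (link (indepC G) A) := by
    intro A hA hAne hAcard
    obtain ⟨v, hv⟩ := hAne
    have hB := erase_mem_link hcx hA hv
    have hT1 := link_indep_vertex G v
    have hB2 := hB
    rw [hT1] at hB2
    obtain ⟨B', hB', hBeq⟩ := image_mem_extract _ hB2
    have hfull := link_image
      (Function.Embedding.subtype (fun x => x ∈ locSet G ({v} : Finset V)))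
      (indepC (locG G {v})) B'
    rw [hBeq] at hfull
    rw [← hT1] at hfull
    rw [link_link hcx hB] at hfull
    rw [erase_union_singleton hv] at hfull
    have hmcA : maxCard (link (indepC G) A) = indNum G - A.card :=
      maxCard_link hcx hmaxd hfacd hA
    rw [hfull, maxCard_image] at hmcA
    rw [hfull]
    apply conn0_image
    have hΔ'c : IsComplex (indepC (locG G {v})) := indep_isComplex _
    refine conn0_of_hvanish _ (link_isComplex hΔ'c hB') (hlcm v B' hB' 1 ?_)
    unfold dimC
    have h2 : 2 ≤ maxCard (link (indepC (locG G {v})) B') := by omega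
    push_cast
    omega
  exact main_conn (indNum G) (indepC G) hcx hmaxd hfacd (fun _ => hconn0) hlink0
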